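/- For p, q > 0 with p + q > 0 and q > 0, and p, q real with p/(p+q) > 0: for a, b > 0, ∫₀^∞ ln((p + q·e^{-ax})/(p + q·e^{-bx}))/x dx = ln(1 + q/p) · ln(b/a). -/

import Mathlib

open MeasureTheory Real Set Filter

lemma hasDerivAt_F (p q t : ℝ) (hp : 0 < p) (hq : 0 < q) (ht : t ≠ 0) (x : ℝ) :
    HasDerivAt (fun x => -(Real.log (p + q * Real.exp (-t * x)) / t))
      (q * Real.exp (-t * x) / (p + q * Real.exp (-t * x))) x := by
  have hpos : 0 < p + q * Real.exp (-t * x) := by positivity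
  have h1 : HasDerivAt (fun x => p + q * Real.exp (-t * x))
      (q * (Real.exp (-t * x) * (-t))) x := by
    have := ((hasDerivAt_id x).const_mul (-t)).exp.const_mul q
    simpa using this.const_add p
  have h2 : HasDerivAt (fun x => -(Real.log (p + q * Real.exp (-t * x)) / t)) _ x :=
    ((h1.log hpos.ne').div_const t).neg
  convert h2 using 1
  field_simp

lemma tendsto_F (p q t : ℝ) (hp : 0 < p) (hq : 0 < q) (ht : 0 < t) :
    Tendsto (fun x => -(Real.log (p + q * Real.exp (-t * x)) / t)) atTop
      (nhds (-(Real.log p / t))) := by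
  have h1 : Tendsto (fun x : ℝ => -t * x) atTop atBot :=
    Tendsto.const_mul_atTop_of_neg (neg_neg_iff_pos.mpr ht) tendsto_id
  have h2 : Tendsto (fun x : ℝ => p + q * Real.exp (-t * x)) atTop (nhds p) := by
    have := (Real.tendsto_exp_atBot.comp h1).const_mul q
    simpa using this.const_add p
  exact (((Real.continuousAt_log hp.ne').tendsto.comp h2).div_const t).neg

lemma inner_nonneg (p q : ℝ) (hp : 0 < p) (hq : 0 < q) (t : ℝ) :
    ∀ x ∈ Ioi (0:ℝ), 0 ≤ q * Real.exp (-t * x) / (p + q * Real.exp (-t * x)) := by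
  intro x _; positivity

lemma inner_int (p q t : ℝ) (hp : 0 < p) (hq : 0 < q) (ht : 0 < t) :
    ∫ x in Ioi (0:ℝ), q * Real.exp (-t * x) / (p + q * Real.exp (-t * x))
      = Real.log ((p + q) / p) / t := by
  have := integral_Ioi_of_hasDerivAt_of_nonneg'
    (fun x (_ : x ∈ Ici (0:ℝ)) => hasDerivAt_F p q t hp hq ht.ne' x)
    (inner_nonneg p q hp hq t) (tendsto_F p q t hp hq ht)
  rw [this, Real.log_div (by positivity) hp.ne']
  simp
  ring

lemma inner_integrable (p q t : ℝ) (hp : 0 < p) (hq : 0 < q) (ht : 0 < t) :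
    IntegrableOn (fun x => q * Real.exp (-t * x) / (p + q * Real.exp (-t * x)))
      (Ioi (0:ℝ)) := by
  exact integrableOn_Ioi_deriv_of_nonneg'
    (fun x (_ : x ∈ Ici (0:ℝ)) => hasDerivAt_F p q t hp hq ht.ne' x)
    (inner_nonneg p q hp hq t) (tendsto_F p q t hp hq ht)

lemma hasDerivAt_G (p q x : ℝ) (hp : 0 < p) (hq : 0 < q) (hx : x ≠ 0) (t : ℝ) :
    HasDerivAt (fun t => -(Real.log (p + q * Real.exp (-t * x)) / x))
      (q * Real.exp (-t * x) / (p + q * Real.exp (-t * x))) t := by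
  have hpos : 0 < p + q * Real.exp (-t * x) := by positivity
  have h1 : HasDerivAt (fun t => p + q * Real.exp (-t * x))
      (q * (Real.exp (-t * x) * (-x))) t := by
    have : HasDerivAt (fun t : ℝ => -t * x) (-x) t := by
      simpa using ((hasDerivAt_id t).neg.mul_const x)
    simpa [mul_comm] using (this.exp.const_mul q).const_add p
  have h2 : HasDerivAt (fun t => -(Real.log (p + q * Real.exp (-t * x)) / x)) _ t :=
    ((h1.log hpos.ne').div_const x).neg
  convert h2 using 1
  field_simp

lemma pointwise_eq (p q a b x : ℝ) (hp : 0 < p) (hq : 0 < q) (hx : 0 < x) :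
    Real.log ((p + q * Real.exp (-a * x)) / (p + q * Real.exp (-b * x))) / x
      = ∫ t in a..b, q * Real.exp (-t * x) / (p + q * Real.exp (-t * x)) := by
  have hcont : ContinuousOn (fun t => q * Real.exp (-t * x) / (p + q * Real.exp (-t * x)))
      (Set.uIcc a b) := by
    apply Continuous.continuousOn
    apply Continuous.div
    · fun_prop
    · fun_prop
    · intro t; positivity
  rw [intervalIntegral.integral_eq_sub_of_hasDerivAt
      (fun t _ => hasDerivAt_G p q x hp hq hx.ne' t) hcont.intervalIntegrable]
  rw [Real.log_div (by positivity) (by positivity)]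
  ring

lemma main_le (p q a b : ℝ) (hp : 0 < p) (hq : 0 < q) (ha : 0 < a) (hb : 0 < b)
    (hab : a ≤ b) :
    ∫ x in Ioi (0:ℝ),
      Real.log ((p + q * Real.exp (-a * x)) / (p + q * Real.exp (-b * x))) / x
      = Real.log (1 + q / p) * Real.log (b / a) := by
  set H : ℝ → ℝ → ℝ := fun t x => q * Real.exp (-t * x) / (p + q * Real.exp (-t * x)) with hH
  have hHcont : Continuous (Function.uncurry H) := by
    apply Continuous.div
    · fun_prop
    · fun_prop
    · intro z; positivity
  have hHnn : ∀ t x : ℝ, 0 ≤ H t x := by intro t x; positivity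
  -- rewrite integrand
  have step1 : ∫ x in Ioi (0:ℝ),
      Real.log ((p + q * Real.exp (-a * x)) / (p + q * Real.exp (-b * x))) / x
      = ∫ x in Ioi (0:ℝ), ∫ t in Ioc a b, H t x := by
    apply setIntegral_congr_fun measurableSet_Ioi
    intro x hx
    dsimp only
    rw [pointwise_eq p q a b x hp hq hx, intervalIntegral.integral_of_le hab]
  rw [step1]
  -- integrability on the product
  have hmeas : AEStronglyMeasurable (fun z : ℝ × ℝ => H z.1 z.2)
      ((volume.restrict (Ioc a b)).prod (volume.restrict (Ioi 0))) :=
    hHcont.aestronglyMeasurable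
  have hInt : Integrable (fun z : ℝ × ℝ => H z.1 z.2)
      ((volume.restrict (Ioc a b)).prod (volume.restrict (Ioi 0))) := by
    rw [integrable_prod_iff hmeas]
    constructor
    · filter_upwards [ae_restrict_mem measurableSet_Ioc] with t ht
      exact inner_integrable p q t hp hq (ha.trans_le ht.1.le)
    · have hint : IntegrableOn (fun t => Real.log ((p + q) / p) / t) (Icc a b) := by
        apply ContinuousOn.integrableOn_Icc
        apply ContinuousOn.div continuousOn_const continuousOn_id
        intro t ht
        exact (ha.trans_le ht.1).ne'
      apply (hint.mono_set Ioc_subset_Icc_self).congr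
      filter_upwards [ae_restrict_mem measurableSet_Ioc] with t ht
      have h1 : (∫ x in Ioi (0:ℝ), ‖H t x‖) = ∫ x in Ioi (0:ℝ), H t x := by
        congr 1; ext x; exact Real.norm_of_nonneg (hHnn t x)
      show Real.log ((p + q) / p) / t = ∫ x in Ioi (0:ℝ), ‖H (t, x).1 (t, x).2‖
      rw [← inner_int p q t hp hq (ha.trans_le ht.1.le), ← h1]
  -- swap
  have swap := integral_integral_swap (f := H) hInt
  rw [← swap]
  -- compute
  have step2 : ∫ t in Ioc a b, ∫ x in Ioi (0:ℝ), H t x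
      = ∫ t in Ioc a b, Real.log ((p + q) / p) / t := by
    apply setIntegral_congr_fun measurableSet_Ioc
    intro t ht
    exact inner_int p q t hp hq (ha.trans_le ht.1.le)
  rw [step2, ← intervalIntegral.integral_of_le hab]
  have h0 : (0:ℝ) ∉ Set.uIcc a b := by
    rw [Set.uIcc_of_le hab]
    intro h
    exact absurd h.1 (not_le.mpr ha)
  have : ∫ t in a..b, Real.log ((p + q) / p) / t
      = Real.log ((p + q) / p) * ∫ t in a..b, 1 / t := by
    rw [← intervalIntegral.integral_const_mul]
    congr 1; ext t; ring
  rw [this, integral_one_div h0]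
  congr 2
  field_simp

theorem frullani_log_ratio (p q a b : ℝ) (hp : 0 < p) (hq : 0 < q) (ha : 0 < a) (hb : 0 < b) :
    ∫ x in Ioi (0:ℝ),
      Real.log ((p + q * Real.exp (-a * x)) / (p + q * Real.exp (-b * x))) / x
      = Real.log (1 + q / p) * Real.log (b / a) := by
  rcases le_total a b with hab | hab
  · exact main_le p q a b hp hq ha hb hab
  · have h := main_le p q b a hp hq hb ha hab
    have hflip : ∫ x in Ioi (0:ℝ),
        Real.log ((p + q * Real.exp (-a * x)) / (p + q * Real.exp (-b * x))) / x
        = -∫ x in Ioi (0:ℝ),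
            Real.log ((p + q * Real.exp (-b * x)) / (p + q * Real.exp (-a * x))) / x := by
      rw [← integral_neg]
      congr 1
      ext x
      rw [← neg_div, ← Real.log_inv, inv_div]
    rw [hflip, h, show Real.log (b / a) = -Real.log (a / b) by rw [← Real.log_inv, inv_div]]
    ring
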